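/- Under the reconstructed one-sample regression model, if the matrix E[u uᵀ] is positive definite, then γ = γ⁰ holds if and only if E[u·e] = 0. Hence the null hypothesis H₀ : γ = γ⁰ is equivalent to the moment condition E[(z − πᵀw)(v − wᵀθ)] = 0. -/

import Mathlib

open MeasureTheory ProbabilityTheory

/-- Under the reconstructed one-sample regression model, if `E[u uᵀ]` is positive
definite, then `γ = γ⁰` iff `E[u·e] = 0`: the null hypothesis `H₀ : γ = γ⁰` is
equivalent to the moment condition `E[(z − πᵀw)(v − wᵀθ)] = 0`. -/
theorem stmt1 {Ω : Type*} [MeasureSpace Ω] [IsProbabilityMeasure (ℙ : Measure Ω)]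
    {k m : ℕ} (z : Ω → Fin k → ℝ) (w : Ω → Fin m → ℝ) (ε : Ω → ℝ)
    (γ γ0 : Fin k → ℝ) (θ : Fin m → ℝ)
    (hz : ∀ i, MemLp (fun ω => z ω i) 2 ℙ)
    (hw : ∀ j, MemLp (fun ω => w ω j) 2 ℙ)
    (hε : Integrable ε ℙ)
    (hεzw : IndepFun (fun ω => (z ω, w ω)) ε ℙ)
    (hε0 : ∫ ω, ε ω = 0)
    (π : Matrix (Fin m) (Fin k) ℝ)
    (y v e : Ω → ℝ) (u : Ω → Fin k → ℝ)
    (hy : ∀ ω, y ω = (∑ i, z ω i * γ i) + (∑ j, w ω j * θ j) + ε ω)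
    (hv : ∀ ω, v ω = y ω - ∑ i, z ω i * γ0 i)
    (he : ∀ ω, e ω = v ω - ∑ j, w ω j * θ j)
    (hu : ∀ ω, u ω = z ω - π.transpose.mulVec (w ω))
    (hπ : ∀ i j, ∫ ω, u ω i * w ω j = 0)
    (hue : ∀ i, Integrable (fun ω => u ω i * e ω) ℙ)
    (huu : ∀ i j, Integrable (fun ω => u ω i * u ω j) ℙ)
    (huε : ∀ i, Integrable (fun ω => u ω i * ε ω) ℙ)
    (huz : ∀ i j, Integrable (fun ω => u ω i * z ω j) ℙ)
    (huw : ∀ i j, Integrable (fun ω => u ω i * w ω j) ℙ)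
    (Q : Matrix (Fin k) (Fin k) ℝ)
    (hQ : ∀ i j, Q i j = ∫ ω, u ω i * u ω j)
    (hQpd : Q.PosDef) :
    γ = γ0 ↔ ∀ i, ∫ ω, u ω i * e ω = 0 := by
  -- explicit formula for u
  have hu' : ∀ ω i, u ω i = z ω i - ∑ l, π l i * w ω l := by
    intro ω i
    simp [hu, Matrix.mulVec, Matrix.transpose_apply, dotProduct]
  -- integrability of u i
  have hui_int : ∀ i, Integrable (fun ω => u ω i) ℙ := by
    intro i
    have h1 : Integrable (fun ω => z ω i) ℙ := (hz i).integrable (by norm_num)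
    have h2 : Integrable (fun ω => ∑ l, π l i * w ω l) ℙ := by
      apply integrable_finset_sum
      intro l _
      exact ((hw l).integrable (by norm_num)).const_mul _
    have := h1.sub h2
    exact this.congr (Filter.Eventually.of_forall fun ω => (hu' ω i).symm)
  -- independence of u i and ε
  have hind : ∀ i, IndepFun (fun ω => u ω i) ε ℙ := by
    intro i
    have hf : Measurable (fun p : (Fin k → ℝ) × (Fin m → ℝ) => p.1 i - ∑ l, π l i * p.2 l) := by
      fun_prop
    have heq : (fun ω => u ω i)
        = (fun p : (Fin k → ℝ) × (Fin m → ℝ) => p.1 i - ∑ l, π l i * p.2 l)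
          ∘ (fun ω => (z ω, w ω)) := funext fun ω => hu' ω i
    rw [heq]
    exact hεzw.comp hf measurable_id
  -- E[u i * ε] = 0
  have huε0 : ∀ i, ∫ ω, u ω i * ε ω = 0 := by
    intro i
    rw [(hind i).integral_fun_mul_eq_mul_integral (hui_int i).aestronglyMeasurable hε.aestronglyMeasurable, hε0,
      mul_zero]
  -- E[u i * z j] = Q i j
  have huzQ : ∀ i j, ∫ ω, u ω i * z ω j = Q i j := by
    intro i j
    have hzeq : ∀ ω, u ω i * z ω j = u ω i * u ω j + ∑ l, π l j * (u ω i * w ω l) := by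
      intro ω
      have : z ω j = u ω j + ∑ l, π l j * w ω l := by rw [hu' ω j]; ring
      rw [this, mul_add, Finset.mul_sum]
      congr 1
      exact Finset.sum_congr rfl fun l _ => by ring
    calc ∫ ω, u ω i * z ω j
        = ∫ ω, (u ω i * u ω j + ∑ l, π l j * (u ω i * w ω l)) := by
          exact integral_congr_ae (Filter.Eventually.of_forall hzeq)
      _ = (∫ ω, u ω i * u ω j) + ∑ l, π l j * ∫ ω, u ω i * w ω l := by
          rw [integral_add (huu i j)]
          · congr 1
            rw [integral_finset_sum]
            · exact Finset.sum_congr rfl fun l _ => integral_const_mul _ _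
            · intro l _; exact (huw i l).const_mul _
          · exact integrable_finset_sum _ fun l _ => (huw i l).const_mul _
      _ = Q i j := by simp [hπ, hQ]
  -- e in terms of z and ε
  have he' : ∀ ω, e ω = (∑ j, z ω j * (γ j - γ0 j)) + ε ω := by
    intro ω
    rw [he, hv, hy]
    rw [Finset.sum_congr rfl (fun j _ => mul_sub (z ω j) (γ j) (γ0 j)),
      Finset.sum_sub_distrib]
    ring
  -- key formula
  have key : ∀ i, ∫ ω, u ω i * e ω = ∑ j, Q i j * (γ j - γ0 j) := by
    intro i
    have heq : ∀ ω, u ω i * e ω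
        = (∑ j, (u ω i * z ω j) * (γ j - γ0 j)) + u ω i * ε ω := by
      intro ω
      rw [he' ω, mul_add, Finset.mul_sum]
      congr 1
      exact Finset.sum_congr rfl fun j _ => by ring
    rw [integral_congr_ae (Filter.Eventually.of_forall heq)]
    rw [integral_add (integrable_finset_sum _ fun j _ => (huz i j).mul_const _) (huε i),
      huε0 i, add_zero, integral_finset_sum _ (fun j _ => (huz i j).mul_const _)]
    exact Finset.sum_congr rfl fun j _ => by rw [integral_mul_const, huzQ]
  constructor
  · intro hγ i
    rw [key i, hγ]
    simp
  · intro h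
    have hd : Q.mulVec (γ - γ0) = 0 := by
      funext i
      have := h i
      rw [key i] at this
      simpa [Matrix.mulVec, dotProduct, mul_sub, Finset.sum_sub_distrib] using this
    by_contra hne
    have hdne : γ - γ0 ≠ 0 := sub_ne_zero.mpr (by exact fun hc => hne hc)
    have := hQpd.dotProduct_mulVec_pos hdne
    rw [hd] at this
    simp at this
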